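/- Let D=(V,A) be a directed acyclic graph with source s and let f: A → {1,2} be a function such that: for every arc uv with u ≠ s, if f(uv)=2 then some arc wu has f(wu)=2, and if f(uv)=1 then either some arc wu has f(wu)=1 or λ(s,u) ≥ 2. Let c: A → F_q^2 be a linear network code of height 2 on every arc (the second coordinate of c(a) is nonzero for every arc a) with the linear combination property, and define c' by c'(uv) = (1,0) if f(uv)=1 and c'(uv) = c(uv) otherwise. Then c' still satisfies the linear combination property: for every node u ≠ s and every outgoing arc uv, c'(uv) lies in the span of {c'(wu) : wu ∈ A}. -/
import Mathlib

/-- Number of arcs of `A` entering the vertex set `X`. -/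
def inDeg {V : Type*} [DecidableEq V] (A : Finset (V × V)) (X : Finset V) : ℕ :=
  (A.filter (fun a => a.1 ∉ X ∧ a.2 ∈ X)).card

/-- `lam A s v`: by Menger's theorem, the maximum number of arc-disjoint `s→v`
paths equals the minimum in-degree of a set containing `v` and avoiding `s`. -/
noncomputable def lam {V : Type*} [DecidableEq V] (A : Finset (V × V)) (s v : V) : ℕ :=
  sInf {n | ∃ X : Finset V, s ∉ X ∧ v ∈ X ∧ inDeg A X = n}

/-- If a set contains `(1,0)` and a vector with nonzero second coordinate,
its span is everything. -/
lemma span_top_of_pair {F : Type*} [Field F] (S : Set (F × F)) (v : F × F)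
    (hv : v ∈ S) (hv2 : v.2 ≠ 0) (h1 : ((1:F),(0:F)) ∈ S) :
    Submodule.span F S = ⊤ := by
  rw [eq_top_iff]
  intro z _
  have hz : z = (z.1 - z.2 / v.2 * v.1) • ((1:F),(0:F)) + (z.2 / v.2) • v := by
    apply Prod.ext <;> simp <;> field_simp
  rw [hz]
  exact Submodule.add_mem _ (Submodule.smul_mem _ _ (Submodule.subset_span h1))
    (Submodule.smul_mem _ _ (Submodule.subset_span hv))

/-- Key verification step of the two-layer characterization: if `f : A → {1,2}`
satisfies the predecessor conditions, `c` is a linear network code of height `2`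
on every arc whose incoming vectors span `F²` at every node `u` with
`λ(s,u) ≥ 2`, and `c'` is obtained by replacing the code by `(1,0)` on every
`1`-valued arc, then `c'` still has the linear combination property. -/
theorem modified_code_linear {V F : Type*} [Field F] [DecidableEq V]
    (A : Finset (V × V)) (s : V)
    (f : V × V → ℕ) (hfr : ∀ a ∈ A, f a = 1 ∨ f a = 2)
    (hc2 : ∀ a ∈ A, a.1 ≠ s → f a = 2 → ∃ b ∈ A, b.2 = a.1 ∧ f b = 2)
    (hc1 : ∀ a ∈ A, a.1 ≠ s → f a = 1 →
      (∃ b ∈ A, b.2 = a.1 ∧ f b = 1) ∨ 2 ≤ lam A s a.1)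
    (c : V × V → F × F)
    (hheight : ∀ a ∈ A, (c a).2 ≠ 0)
    (hlin : ∀ a ∈ A, a.1 ≠ s →
      c a ∈ Submodule.span F {x | ∃ b ∈ A, b.2 = a.1 ∧ x = c b})
    (hspan : ∀ u : V, 2 ≤ lam A s u →
      Submodule.span F {x | ∃ b ∈ A, b.2 = u ∧ x = c b} = (⊤ : Submodule F (F × F))) :
    ∀ a ∈ A, a.1 ≠ s →
      (if f a = 1 then ((1 : F), (0 : F)) else c a) ∈
        Submodule.span F
          {x | ∃ b ∈ A, b.2 = a.1 ∧ x = (if f b = 1 then ((1 : F), (0 : F)) else c b)} := by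
  intro a ha hs
  set S : Set (F × F) :=
    {x | ∃ b ∈ A, b.2 = a.1 ∧ x = (if f b = 1 then ((1 : F), (0 : F)) else c b)} with hS
  by_cases hall : ∀ b ∈ A, b.2 = a.1 → f b ≠ 1
  · have hSold : S = {x | ∃ b ∈ A, b.2 = a.1 ∧ x = c b} := by
      ext x
      constructor
      · rintro ⟨b, hb, hb2, rfl⟩
        exact ⟨b, hb, hb2, by rw [if_neg (hall b hb hb2)]⟩
      · rintro ⟨b, hb, hb2, rfl⟩
        exact ⟨b, hb, hb2, by rw [if_neg (hall b hb hb2)]⟩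
    rcases hfr a ha with h1 | h2
    · rw [if_pos h1]
      rcases hc1 a ha hs h1 with ⟨b, hb, hb2, hfb⟩ | hlam
      · exact absurd hfb (hall b hb hb2)
      · rw [hSold, hspan a.1 hlam]; trivial
    · rw [if_neg (by omega : ¬ f a = 1)]
      rw [hSold]
      exact hlin a ha hs
  · push_neg at hall
    obtain ⟨b1, hb1, hb12, hfb1⟩ := hall
    have h10 : ((1:F),(0:F)) ∈ S := ⟨b1, hb1, hb12, by rw [if_pos hfb1]⟩
    rcases hfr a ha with h1 | h2
    · rw [if_pos h1]
      exact Submodule.subset_span h10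
    · rw [if_neg (by omega : ¬ f a = 1)]
      obtain ⟨b2, hb2, hb22, hfb2⟩ := hc2 a ha hs h2
      have hcb : c b2 ∈ S := ⟨b2, hb2, hb22, by rw [if_neg (by omega : ¬ f b2 = 1)]⟩
      rw [span_top_of_pair S (c b2) hcb (hheight b2 hb2) h10]
      trivial
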